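/- If C₁ ⊆ ℝⁿ is an orthotope with side lengths b₁,...,b_n, then the number of integer points in C₁ is at least ∏_{i=1}^n max(b_i - √n, 0). -/

import Mathlib

open MeasureTheory Finset Pointwise
open scoped ENNReal

/-- Integer points with bounded coordinates form a finite set. -/
lemma lattice_finite (n : ℕ) (c : Fin n → ℝ) (B : ℝ) :
    {x : Fin n → ℝ | (∀ i, ∃ z : ℤ, x i = (z : ℝ)) ∧ ∀ i, |x i - c i| ≤ B}.Finite := by
  have : {x : Fin n → ℝ | (∀ i, ∃ z : ℤ, x i = (z : ℝ)) ∧ ∀ i, |x i - c i| ≤ B} ⊆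
      Set.pi Set.univ (fun k => ((↑) '' (Set.Icc ⌈c k - B⌉ ⌊c k + B⌋) : Set ℝ)) := by
    rintro x ⟨hz, hbd⟩ k -
    obtain ⟨z, hzk⟩ := hz k
    have h1 : |x k - c k| ≤ B := hbd k
    rw [abs_le] at h1
    refine ⟨z, ?_, hzk.symm⟩
    constructor
    · rw [Int.ceil_le, ← hzk]; linarith [h1.1]
    · rw [Int.le_floor, ← hzk]; linarith [h1.2]
  exact Set.Finite.subset (Set.Finite.pi fun k => (Set.finite_Icc _ _).image _) this

theorem stmt4 (n : ℕ) (hn : 1 ≤ n) (x0 : Fin n → ℝ) (v : Fin n → Fin n → ℝ)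
    (hv : ∀ i j, (∑ k, v i k * v j k) = if i = j then (1 : ℝ) else 0)
    (b : Fin n → ℝ) (hb : ∀ i, 0 ≤ b i) :
    (∏ i, max (b i - Real.sqrt n) 0)
      ≤ ((Set.ncard {x : Fin n → ℝ | (∀ i, ∃ z : ℤ, x i = (z : ℝ)) ∧
          ∃ t : Fin n → ℝ, (∀ i, 0 ≤ t i ∧ t i ≤ b i) ∧
            x = x0 + ∑ i, t i • v i} : ℕ) : ℝ) := by
  classical
  set δ : ℝ := Real.sqrt n with hδ
  have hδ0 : 0 ≤ δ := Real.sqrt_nonneg _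
  set T : Set (Fin n → ℝ) := {x : Fin n → ℝ | (∀ i, ∃ z : ℤ, x i = (z : ℝ)) ∧
          ∃ t : Fin n → ℝ, (∀ i, 0 ≤ t i ∧ t i ≤ b i) ∧
            x = x0 + ∑ i, t i • v i} with hT
  by_cases hcase : ∃ i, b i ≤ δ
  · obtain ⟨i, hi⟩ := hcase
    have h1 : (∏ i, max (b i - δ) 0) = 0 :=
      Finset.prod_eq_zero (mem_univ i) (by simp [max_eq_right, sub_nonpos.2 hi])
    rw [h1]; positivity
  push_neg at hcase
  -- matrix facts
  set M : Matrix (Fin n) (Fin n) ℝ := Matrix.of v with hMdef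
  have hM : M * M.transpose = 1 := by
    ext i j
    simpa [hMdef, Matrix.mul_apply, Matrix.one_apply] using hv i j
  have hMt : M.transpose * M = 1 := mul_eq_one_comm.mp hM
  have htM : ∀ m k, (∑ i, v i m * v i k) = if m = k then (1 : ℝ) else 0 := by
    intro m k
    have := congrFun (congrFun hMt m) k
    simpa [hMdef, Matrix.mul_apply, Matrix.one_apply, mul_comm] using this
  have hdet : |M.transpose.det| = 1 := by
    have h := congrArg Matrix.det hM
    rw [Matrix.det_mul, Matrix.det_transpose, Matrix.det_one] at h
    rw [Matrix.det_transpose]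
    rcases mul_self_eq_one_iff.mp h with h' | h' <;> rw [h'] <;> norm_num
  -- coordinate bound for v
  have hv1 : ∀ i k, |v i k| ≤ 1 := by
    intro i k
    have h1 := hv i i
    rw [if_pos rfl] at h1
    have h2 : v i k * v i k ≤ 1 := by
      rw [← h1]
      exact Finset.single_le_sum (fun m _ => mul_self_nonneg (v i m)) (mem_univ k)
    nlinarith [abs_nonneg (v i k), sq_abs (v i k)]
  -- T is finite
  have hTfin : T.Finite := by
    apply (lattice_finite n x0 (∑ i, b i)).subset
    rintro x ⟨hz, t, ht, hx⟩
    refine ⟨hz, fun k => ?_⟩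
    have hxk : x k - x0 k = ∑ i, t i * v i k := by
      rw [hx]; simp [Finset.sum_apply]
    rw [hxk]
    calc |∑ i, t i * v i k| ≤ ∑ i, |t i * v i k| := Finset.abs_sum_le_sum_abs _ _
      _ ≤ ∑ i, b i := by
          apply Finset.sum_le_sum
          intro i _
          rw [abs_mul, abs_of_nonneg (ht i).1]
          calc t i * |v i k| ≤ t i * 1 := by
                exact mul_le_mul_of_nonneg_left (hv1 i k) (ht i).1
            _ = t i := mul_one _
            _ ≤ b i := (ht i).2
  -- the linear map
  set L : (Fin n → ℝ) →ₗ[ℝ] (Fin n → ℝ) := Matrix.toLin' M.transpose with hLdef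
  have hLapp : ∀ t : Fin n → ℝ, L t = ∑ i, t i • v i := by
    intro t
    funext k
    rw [hLdef]
    simp only [Matrix.toLin'_apply, Matrix.mulVec, Matrix.transpose_apply, Finset.sum_apply,
      Pi.smul_apply, smul_eq_mul, dotProduct]
    simp [hMdef, mul_comm]
  -- the shrunk box and set
  set B2 : Set (Fin n → ℝ) := Set.pi Set.univ (fun i => Set.Icc (δ/2) (b i - δ/2)) with hB2
  set S' : Set (Fin n → ℝ) := x0 +ᵥ (L '' B2) with hS'
  have hvolB2 : volume B2 = ENNReal.ofReal (∏ i, (b i - δ)) := by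
    rw [hB2, volume_pi_pi]
    rw [ENNReal.ofReal_prod_of_nonneg (fun i _ => by linarith [le_of_lt (hcase i)])]
    congr 1; funext i
    rw [Real.volume_Icc]; ring_nf
  have hvolS' : volume S' = ENNReal.ofReal (∏ i, (b i - δ)) := by
    rw [hS', measure_vadd, Measure.addHaar_image_linearMap, hLdef,
      LinearMap.det_toLin', hdet, hvolB2]
    simp
  -- covering: S' ⊆ union of unit cubes centered at points of T
  have hcover : S' ⊆ ⋃ y ∈ hTfin.toFinset,
      Set.pi Set.univ (fun i => Set.Icc (y i - 1/2) (y i + 1/2)) := by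
    rintro x hx
    obtain ⟨w, ⟨tt, htt, rfl⟩, rfl⟩ : ∃ w, (∃ tt ∈ B2, L tt = w) ∧ x = x0 + w := by
      obtain ⟨w, hw, hxw⟩ := hS' ▸ hx
      exact ⟨w, hw, by simpa [Set.mem_vadd_set] using hxw.symm⟩
    set x : Fin n → ℝ := x0 + L tt with hxdef
    set y : Fin n → ℝ := fun k => ((⌊x k + 1/2⌋ : ℤ) : ℝ) with hydef
    set u : Fin n → ℝ := x - y with hudef
    have hu : ∀ k, |u k| ≤ 1/2 := by
      intro k
      have h1 := Int.floor_le (x k + 1/2)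
      have h2 := Int.lt_floor_add_one (x k + 1/2)
      rw [abs_le]
      constructor <;> simp only [hudef, Pi.sub_apply, hydef] <;> push_cast <;> linarith
    have husq : (∑ k, u k ^ 2) ≤ (n : ℝ) / 4 := by
      calc (∑ k, u k ^ 2) ≤ ∑ _k : Fin n, (1/4 : ℝ) := by
            apply Finset.sum_le_sum
            intro k _
            have := hu k
            nlinarith [sq_abs (u k), abs_nonneg (u k)]
        _ = (n : ℝ) / 4 := by simp; ring
    set s : Fin n → ℝ := fun i => ∑ k, u k * v i k with hsdef
    have hs : ∀ i, |s i| ≤ δ / 2 := by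
      intro i
      have hcs : (s i) ^ 2 ≤ (∑ k, u k ^ 2) * (∑ k, (v i k) ^ 2) :=
        Finset.sum_mul_sq_le_sq_mul_sq _ _ _
      have hvi : (∑ k, (v i k) ^ 2) = 1 := by
        simpa [pow_two] using hv i i
      rw [hvi, mul_one] at hcs
      have hsq : (s i) ^ 2 ≤ (δ/2) ^ 2 := by
        have : (δ/2) ^ 2 = (n : ℝ) / 4 := by
          rw [div_pow, hδ, Real.sq_sqrt (Nat.cast_nonneg n)]; norm_num
        rw [this]; exact hcs.trans husq
      have := Real.sqrt_le_sqrt hsq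
      rwa [Real.sqrt_sq_eq_abs, Real.sqrt_sq (by positivity)] at this
    have hus : u = ∑ i, s i • v i := by
      funext k
      rw [Finset.sum_apply]
      simp only [Pi.smul_apply, smul_eq_mul, hsdef]
      symm
      calc (∑ i, (∑ m, u m * v i m) * v i k)
          = ∑ i, ∑ m, u m * (v i m * v i k) := by
            refine Finset.sum_congr rfl fun i _ => ?_
            rw [Finset.sum_mul]
            exact Finset.sum_congr rfl fun m _ => by ring
        _ = ∑ m, u m * (∑ i, v i m * v i k) := by
            rw [Finset.sum_comm]
            exact Finset.sum_congr rfl fun m _ => by rw [Finset.mul_sum]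
        _ = u k := by
            simp only [htM]
            simp
    have hyT : y ∈ T := by
      refine ⟨fun i => ⟨⌊x i + 1/2⌋, rfl⟩, fun i => tt i - s i, fun i => ?_, ?_⟩
      · have htti : tt i ∈ Set.Icc (δ/2) (b i - δ/2) := htt i (Set.mem_univ i)
        obtain ⟨hs1, hs2⟩ := abs_le.mp (hs i)
        refine ⟨?_, ?_⟩
        · show (0:ℝ) ≤ tt i - s i
          linarith [htti.1]
        · show tt i - s i ≤ b i
          linarith [htti.2]
      · have hyx : y = x - u := by rw [hudef]; abel
        rw [hyx, hxdef, hLapp, hus]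
        funext k
        simp only [Pi.add_apply, Pi.sub_apply, Finset.sum_apply, Pi.smul_apply, smul_eq_mul,
          sub_mul]
        rw [Finset.sum_sub_distrib]
        ring
    refine Set.mem_iUnion₂.mpr ⟨y, hTfin.mem_toFinset.mpr hyT, ?_⟩
    intro k _
    have := hu k
    rw [abs_le] at this
    simp only [hudef, Pi.sub_apply] at this
    obtain ⟨h1, h2⟩ := this
    exact ⟨by linarith, by linarith⟩
  -- conclude
  have hcard : volume S' ≤ (hTfin.toFinset.card : ℝ≥0∞) := by
    calc volume S' ≤ volume (⋃ y ∈ hTfin.toFinset,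
          Set.pi Set.univ (fun i => Set.Icc (y i - 1/2) (y i + 1/2))) := measure_mono hcover
      _ ≤ ∑ y ∈ hTfin.toFinset,
            volume (Set.pi Set.univ (fun i => Set.Icc (y i - 1/2) (y i + 1/2))) :=
          measure_biUnion_finset_le _ _
      _ = ∑ _y ∈ hTfin.toFinset, 1 := by
          apply Finset.sum_congr rfl
          intro y _
          rw [volume_pi_pi]
          have : ∀ i : Fin n, volume (Set.Icc (y i - 1/2) (y i + 1/2)) = 1 := by
            intro i
            rw [Real.volume_Icc]
            norm_num
          rw [Finset.prod_eq_one fun i _ => this i]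
      _ = (hTfin.toFinset.card : ℝ≥0∞) := by simp
  rw [hvolS'] at hcard
  have hmax : (∏ i, max (b i - δ) 0) = ∏ i, (b i - δ) := by
    apply Finset.prod_congr rfl
    intro i _
    exact max_eq_left (by linarith [hcase i])
  have hncard : T.ncard = hTfin.toFinset.card := Set.ncard_eq_toFinset_card T hTfin
  rw [hmax, hncard]
  rw [← ENNReal.ofReal_natCast] at hcard
  exact (ENNReal.ofReal_le_ofReal_iff (Nat.cast_nonneg _)).mp hcard
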